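/- arXiv:0705.3058 — 2 statements merged into one kernel-verified Lean document; each statement's English description precedes it below -/
import Mathlib

section
/- For the retransmission policy, the service rate μ = pφσ(φ+σ−τ)/((φ+σ)(φ+σ−τ) − φσ) satisfies μ ≤ p·min(φ, σ). -/
/-- The retransmission service rate μ = pφσ(φ+σ−τ)/((φ+σ)(φ+σ−τ) − φσ) is at most
p·min(φ,σ), the Shannon capacity bound. -/
theorem retransmission_rate_le_capacity (p φ σ τ : ℝ)
    (hp : 0 < p) (hp' : p ≤ 1) (hφ0 : 0 < φ) (hφ : φ ≤ 1) (hσ0 : 0 < σ) (hσ : σ ≤ 1)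
    (hτ : 0 < τ) (hτφ : τ ≤ φ) (hτσ : τ ≤ σ) :
    p * φ * σ * (φ + σ - τ) / ((φ + σ) * (φ + σ - τ) - φ * σ) ≤ p * min φ σ := by
  have hD : 0 < (φ + σ) * (φ + σ - τ) - φ * σ := by nlinarith
  rw [div_le_iff₀ hD]
  rcases le_total φ σ with h | h
  · rw [min_eq_left h]; nlinarith [mul_nonneg (mul_nonneg hp.le (mul_pos hφ0 hφ0).le) (sub_nonneg.2 hτφ)]
  · rw [min_eq_right h]; nlinarith [mul_nonneg (mul_nonneg hp.le (mul_pos hσ0 hσ0).le) (sub_nonneg.2 hτσ)]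
end

section
/- In the random access erasure channel model, the conditional mutual information satisfies I(X_1; Y_m | X_2) = h_b(p_1) + u·(p_1(1−p_2)q_{1|1}^{(m)} + p_1 p_2 q_{1|1,2}^{(m)}) bits, where X_1 takes the idle value 0 with probability 1−p_1 and is uniform on 2^u packet values otherwise, and Y_m reveals X_1 exactly with probability q_{1|1}^{(m)} when X_2 = 0 (resp. q_{1|1,2}^{(m)} when X_2 ≠ 0) and outputs an erasure symbol Δ otherwise. -/
noncomputable section

/-- Input alphabet: 0 is the idle symbol, 1,...,2^u are packet values. -/
abbrev InAlpha (u : ℕ) := Fin (2 ^ u + 1)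

/-- Output alphabet: `some x` means x is received, `none` is the erasure symbol Δ. -/
abbrev OutAlpha (u : ℕ) := Option (InAlpha u)

/-- Input distribution: idle with probability 1−p, uniform over the 2^u packets. -/
def inputPMF (u : ℕ) (p : ℝ) : InAlpha u → ℝ :=
  fun x => if x = 0 then 1 - p else p / 2 ^ u

/-- Erasure channel at destination m: when X1 = 0 the output is `some 0`; when X1 ≠ 0
the output is `some X1` with probability q11 (if X2 = 0) or q112 (if X2 ≠ 0),
and the erasure Δ otherwise. -/
def channelPMF (u : ℕ) (q11 q112 : ℝ) : InAlpha u → InAlpha u → OutAlpha u → ℝ :=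
  fun x1 x2 y =>
    if x1 = 0 then (if y = some 0 then 1 else 0)
    else
      let q := if x2 = 0 then q11 else q112
      if y = some x1 then q else if y = none then 1 - q else 0

/-- Joint distribution of (X1, X2, Y_m): X1, X2 independent inputs. -/
def jointPMF (u : ℕ) (p1 p2 q11 q112 : ℝ) : InAlpha u → InAlpha u → OutAlpha u → ℝ :=
  fun x1 x2 y => inputPMF u p1 x1 * inputPMF u p2 x2 * channelPMF u q11 q112 x1 x2 y

/-- Conditional mutual information I(X1; Y_m | X2) in bits, computed from the joint pmf
(with the convention 0·log(·) = 0, valid since Real.logb 2 0 = 0). -/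
def condMutInfo (u : ℕ) (p1 p2 q11 q112 : ℝ) : ℝ :=
  ∑ x1 : InAlpha u, ∑ x2 : InAlpha u, ∑ y : OutAlpha u,
    jointPMF u p1 p2 q11 q112 x1 x2 y *
      Real.logb 2
        (jointPMF u p1 p2 q11 q112 x1 x2 y *
            (∑ x1' : InAlpha u, ∑ y' : OutAlpha u, jointPMF u p1 p2 q11 q112 x1' x2 y') /
          ((∑ y' : OutAlpha u, jointPMF u p1 p2 q11 q112 x1 x2 y') *
            (∑ x1' : InAlpha u, jointPMF u p1 p2 q11 q112 x1' x2 y)))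

/-- Binary entropy function. -/
def binEnt (p : ℝ) : ℝ := -(p * Real.logb 2 p) - (1 - p) * Real.logb 2 (1 - p)

section AuxLemmas

variable (u : ℕ) (p1 p2 q11 q112 : ℝ)

lemma sum_inputPMF : ∑ x : InAlpha u, inputPMF u p1 x = 1 := by
  rw [Fin.sum_univ_succ]
  simp [inputPMF, Fin.succ_ne_zero, Finset.sum_const]
  have : ((2:ℝ)^u) ≠ 0 := by positivity
  field_simp
  ring

lemma sum_channel (x1 x2 : InAlpha u) : ∑ y : OutAlpha u, channelPMF u q11 q112 x1 x2 y = 1 := by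
  rw [Fintype.sum_option]
  by_cases h : x1 = 0 <;> simp [channelPMF, h, Finset.sum_ite_eq']

lemma margB (x1 x2 : InAlpha u) :
    ∑ y : OutAlpha u, jointPMF u p1 p2 q11 q112 x1 x2 y
      = inputPMF u p1 x1 * inputPMF u p2 x2 := by
  simp only [jointPMF, ← Finset.mul_sum, sum_channel, mul_one]

lemma margA (x2 : InAlpha u) :
    ∑ x1' : InAlpha u, ∑ y' : OutAlpha u, jointPMF u p1 p2 q11 q112 x1' x2 y'
      = inputPMF u p2 x2 := by
  simp only [margB]
  rw [← Finset.sum_mul, sum_inputPMF, one_mul]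

lemma margC_none (x2 : InAlpha u) :
    ∑ x1' : InAlpha u, jointPMF u p1 p2 q11 q112 x1' x2 none
      = inputPMF u p2 x2 * (p1 * (1 - if x2 = 0 then q11 else q112)) := by
  have h2 : ((2:ℝ)^u) ≠ 0 := by positivity
  rcases eq_or_ne x2 0 with h | h <;>
    rw [Fin.sum_univ_succ] <;>
    simp [jointPMF, inputPMF, channelPMF, Fin.succ_ne_zero, Finset.sum_const, h] <;>
    field_simp <;> ring

lemma margC_some0 (x2 : InAlpha u) :
    ∑ x1' : InAlpha u, jointPMF u p1 p2 q11 q112 x1' x2 (some 0)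
      = inputPMF u p2 x2 * (1 - p1) := by
  rw [Fin.sum_univ_succ]
  simp [jointPMF, inputPMF, channelPMF, Fin.succ_ne_zero, (Fin.succ_ne_zero _).symm]
  ring

lemma margC_some (x2 : InAlpha u) (a : InAlpha u) (ha : a ≠ 0) :
    ∑ x1' : InAlpha u, jointPMF u p1 p2 q11 q112 x1' x2 (some a)
      = inputPMF u p2 x2 * (p1 / 2 ^ u * if x2 = 0 then q11 else q112) := by
  rw [Finset.sum_eq_single a]
  · simp [jointPMF, inputPMF, channelPMF, ha]; ring
  · intro b _ hb
    have hba : ¬ a = b := fun h => hb h.symm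
    by_cases hb0 : b = 0 <;> simp [jointPMF, channelPMF, hb0, hba, ha]
  · simp
lemma key (j den P2 a : ℝ) (ha : a ≠ 0) (hP : P2 ≠ 0) (h : j * P2 * a = den) :
    j * Real.logb 2 (j * P2 / den) = -(j * Real.logb 2 a) := by
  rcases eq_or_ne j 0 with rfl | hj
  · simp
  · have hd : j * P2 / den = a⁻¹ := by
      rw [← h, div_eq_iff (by exact mul_ne_zero (mul_ne_zero hj hP) ha)]
      field_simp
    rw [hd, Real.logb_inv]; ring

lemma inputPMF_zero : inputPMF u p1 0 = 1 - p1 := if_pos rfl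
lemma inputPMF_ne (a : InAlpha u) (ha : a ≠ 0) : inputPMF u p1 a = p1 / 2 ^ u := if_neg ha

lemma joint_zero_none (x2 : InAlpha u) : jointPMF u p1 p2 q11 q112 0 x2 none = 0 := by
  simp [jointPMF, channelPMF]

lemma joint_zero_some0 (x2 : InAlpha u) :
    jointPMF u p1 p2 q11 q112 0 x2 (some 0) = (1 - p1) * inputPMF u p2 x2 := by
  simp [jointPMF, channelPMF, inputPMF_zero]

lemma joint_zero_some (x2 b : InAlpha u) (hb : b ≠ 0) :
    jointPMF u p1 p2 q11 q112 0 x2 (some b) = 0 := by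
  simp [jointPMF, channelPMF, hb]

lemma joint_ne_none (x2 a : InAlpha u) (ha : a ≠ 0) :
    jointPMF u p1 p2 q11 q112 a x2 none
      = p1 / 2 ^ u * inputPMF u p2 x2 * (1 - if x2 = 0 then q11 else q112) := by
  simp [jointPMF, channelPMF, ha, inputPMF_ne u p1 a ha]

lemma joint_ne_some_self (x2 a : InAlpha u) (ha : a ≠ 0) :
    jointPMF u p1 p2 q11 q112 a x2 (some a)
      = p1 / 2 ^ u * inputPMF u p2 x2 * (if x2 = 0 then q11 else q112) := by
  simp [jointPMF, channelPMF, ha, inputPMF_ne u p1 a ha]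

lemma joint_ne_some_other (x2 a b : InAlpha u) (ha : a ≠ 0) (hb : b ≠ a) :
    jointPMF u p1 p2 q11 q112 a x2 (some b) = 0 := by
  simp [jointPMF, channelPMF, ha, hb]

lemma inner_y (x2 x1 : InAlpha u) (hP2 : inputPMF u p2 x2 ≠ 0) :
    ∑ y : OutAlpha u,
      jointPMF u p1 p2 q11 q112 x1 x2 y *
        Real.logb 2 (jointPMF u p1 p2 q11 q112 x1 x2 y * inputPMF u p2 x2 /
          ((inputPMF u p1 x1 * inputPMF u p2 x2) *
            (∑ x1' : InAlpha u, jointPMF u p1 p2 q11 q112 x1' x2 y)))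
    = if x1 = 0 then -((1 - p1) * inputPMF u p2 x2 * Real.logb 2 (1 - p1))
      else p1 / 2 ^ u * inputPMF u p2 x2 *
        ((if x2 = 0 then q11 else q112) * u - Real.logb 2 p1) := by
  have h2 : ((2:ℝ) ^ u) ≠ 0 := by positivity
  rw [Fintype.sum_option]
  by_cases hx1 : x1 = 0
  · subst hx1
    rw [if_pos rfl, joint_zero_none, zero_mul, zero_add]
    rw [Finset.sum_eq_single (0 : InAlpha u)
      (fun b _ hb => by rw [joint_zero_some u p1 p2 q11 q112 x2 b hb, zero_mul])
      (fun h => absurd (Finset.mem_univ _) h)]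
    rw [joint_zero_some0, margC_some0, inputPMF_zero]
    rcases eq_or_ne p1 1 with h1 | h1
    · simp [h1]
    · exact key _ _ _ _ (sub_ne_zero.2 (Ne.symm h1)) hP2 (by ring)
  · rw [if_neg hx1, margC_none, joint_ne_none u p1 p2 q11 q112 x2 x1 hx1]
    rw [Finset.sum_eq_single x1
      (fun b _ hb => by rw [joint_ne_some_other u p1 p2 q11 q112 x2 x1 b hx1 hb, zero_mul])
      (fun h => absurd (Finset.mem_univ _) h)]
    rw [joint_ne_some_self u p1 p2 q11 q112 x2 x1 hx1,
      margC_some u p1 p2 q11 q112 x2 x1 hx1,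
      inputPMF_ne u p1 x1 hx1]
    rcases eq_or_ne p1 0 with h0 | h0
    · simp [h0]
    have hpd : p1 / 2 ^ u ≠ 0 := div_ne_zero h0 h2
    rw [key _ _ _ p1 h0 hP2 (by ring),
      key _ _ _ (p1 / 2 ^ u) hpd hP2 (by ring)]
    have hlog : Real.logb 2 (p1 / 2 ^ u) = Real.logb 2 p1 - u := by
      rw [Real.logb_div h0 h2, Real.logb_pow]
      simp
    rw [hlog]
    ring
lemma inner_eq (x2 : InAlpha u) :
    ∑ x1 : InAlpha u, ∑ y : OutAlpha u,
      jointPMF u p1 p2 q11 q112 x1 x2 y *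
        Real.logb 2
          (jointPMF u p1 p2 q11 q112 x1 x2 y *
              (∑ x1' : InAlpha u, ∑ y' : OutAlpha u, jointPMF u p1 p2 q11 q112 x1' x2 y') /
            ((∑ y' : OutAlpha u, jointPMF u p1 p2 q11 q112 x1 x2 y') *
              (∑ x1' : InAlpha u, jointPMF u p1 p2 q11 q112 x1' x2 y)))
    = inputPMF u p2 x2 *
        (binEnt p1 + u * (p1 * if x2 = 0 then q11 else q112)) := by
  have h2 : ((2:ℝ) ^ u) ≠ 0 := by positivity
  rcases eq_or_ne (inputPMF u p2 x2) 0 with hP2 | hP2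
  · simp [jointPMF, hP2]
  · simp only [margB, ← Finset.sum_mul, sum_inputPMF, one_mul]
    rw [Finset.sum_congr rfl (fun x1 _ => inner_y u p1 p2 q11 q112 x2 x1 hP2)]
    rw [Fin.sum_univ_succ]
    simp only [if_pos rfl, Fin.succ_ne_zero, if_neg (Fin.succ_ne_zero _),
      Finset.sum_const, Finset.card_univ, Fintype.card_fin, nsmul_eq_mul]
    rcases eq_or_ne x2 0 with h | h
    · subst h
      simp only [if_pos rfl]
      push_cast
      field_simp [binEnt]
      unfold binEnt
      ring
    · simp only [if_neg h]
      push_cast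
      field_simp [binEnt]
      unfold binEnt
      ring

end AuxLemmas

/-- I(X1; Y_m | X2) = h_b(p1) + u·(p1(1−p2)q_{1|1}^{(m)} + p1 p2 q_{1|1,2}^{(m)}). -/
theorem condMutInfo_random_access (u : ℕ) (hu : 1 ≤ u) (p1 p2 q11 q112 : ℝ)
    (hp1 : 0 ≤ p1) (hp1' : p1 ≤ 1) (hp2 : 0 ≤ p2) (hp2' : p2 ≤ 1)
    (hq11 : 0 ≤ q11) (hq11' : q11 ≤ 1) (hq112 : 0 ≤ q112) (hq112' : q112 ≤ 1) :
    condMutInfo u p1 p2 q11 q112 =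
      binEnt p1 + u * (p1 * (1 - p2) * q11 + p1 * p2 * q112) := by
  have h2 : ((2:ℝ) ^ u) ≠ 0 := by positivity
  unfold condMutInfo
  rw [Finset.sum_comm]
  rw [Finset.sum_congr rfl (fun x2 _ => inner_eq u p1 p2 q11 q112 x2)]
  rw [Fin.sum_univ_succ]
  simp only [inputPMF_zero, if_pos rfl, Fin.succ_ne_zero, if_neg (Fin.succ_ne_zero _),
    inputPMF_ne u p2 _ (Fin.succ_ne_zero _), Finset.sum_const, Finset.card_univ,
    Fintype.card_fin, nsmul_eq_mul]
  push_cast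
  field_simp
  ring

end
end
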